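/- Assume s^in ∈ Ω₁, r ∈ (0,1), and μ(r) > 0. Then there exists ρ > 0 such that Γ_ρ⁺ := {s ∈ Γ⁺ : V_i(s) > −ρ for all i = 2,…,n} is a subset of G⁺ := {s ∈ Γ⁺ ∩ Ω₁ : I(s) > 0}; that is, every point of Γ⁺ at which all V_i exceed −ρ lies in Ω₁ and has strictly positive net biomass change I over one cycle. -/

import Mathlib

open Filter Set Topology

noncomputable section

/-- Hypotheses on the uptake function `F`: Lipschitz on the closed positive cone,
vanishing when some nutrient is exhausted, positive on the open positive cone, and
strictly increasing in each argument on the positive cone. -/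
def FHyp {n : ℕ} (F : (Fin n → ℝ) → ℝ) : Prop :=
  (∃ K : NNReal, LipschitzOnWith K F {s : Fin n → ℝ | ∀ i, 0 ≤ s i}) ∧
  (∀ s : Fin n → ℝ, (∀ i, 0 ≤ s i) → (∃ i, s i = 0) → F s = 0) ∧
  (∀ s : Fin n → ℝ, (∀ i, 0 < s i) → 0 < F s) ∧
  (∀ s : Fin n → ℝ, (∀ i, 0 < s i) → ∀ i : Fin n, ∀ ε : ℝ, 0 < ε →
    F s < F (Function.update s i (s i + ε)))

/-- The component Lyapunov-like function `V_i(s) = y₁(s₁ⁱⁿ - s₁) - y_i(s_iⁱⁿ - s_i)`. -/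
def Vfun {n : ℕ} [NeZero n] (y sIn : Fin n → ℝ) (i : Fin n) (s : Fin n → ℝ) : ℝ :=
  y 0 * (sIn 0 - s 0) - y i * (sIn i - s i)

/-- `V̄_i = y₁(s₁ⁱⁿ - s̄₁) - y_i s_iⁱⁿ`. -/
def Vbar {n : ℕ} [NeZero n] (y sIn : Fin n → ℝ) (sbar1 : ℝ) (i : Fin n) : ℝ :=
  y 0 * (sIn 0 - sbar1) - y i * sIn i

/-- `Ω₀ = {s ∈ ℝⁿ₊ : s₁ ≥ s̄₁, V_i(s) < V̄_i for at least one i = 2,…,n}`. -/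
def Omega0 {n : ℕ} [NeZero n] (y sIn : Fin n → ℝ) (sbar1 : ℝ) : Set (Fin n → ℝ) :=
  {s | (∀ i, 0 < s i) ∧ sbar1 ≤ s 0 ∧ ∃ i, i ≠ 0 ∧ Vfun y sIn i s < Vbar y sIn sbar1 i}

/-- `Ω₁ = {s ∈ ℝⁿ₊ : s₁ ≥ s̄₁, V_i(s) > V̄_i for all i = 2,…,n}`. -/
def Omega1 {n : ℕ} [NeZero n] (y sIn : Fin n → ℝ) (sbar1 : ℝ) : Set (Fin n → ℝ) :=
  {s | (∀ i, 0 < s i) ∧ sbar1 ≤ s 0 ∧ ∀ i, i ≠ 0 → Vbar y sIn sbar1 i < Vfun y sIn i s}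

/-- `φ_ν(s⁰) = s⁰ - ν y₁ (s₁⁰ - s̄₁) Y`, with `Y = (1/y₁, …, 1/yₙ)`. -/
def phiNu {n : ℕ} [NeZero n] (y : Fin n → ℝ) (sbar1 ν : ℝ) (s0 : Fin n → ℝ) : Fin n → ℝ :=
  fun i => s0 i - ν * (y 0 * (s0 0 - sbar1)) * (1 / y i)

/-- `I(s⁰) = y₁ (s₁⁰ - s̄₁) ∫₀¹ (1 - D / F(φ_ν(s⁰))) dν`, the net biomass change over one cycle. -/
def Ifun {n : ℕ} [NeZero n] (F : (Fin n → ℝ) → ℝ) (D : ℝ) (y : Fin n → ℝ)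
    (sbar1 : ℝ) (s0 : Fin n → ℝ) : ℝ :=
  y 0 * (s0 0 - sbar1) * ∫ ν in (0:ℝ)..1, (1 - D / F (phiNu y sbar1 ν s0))

/-- `ŝ⁺(r) = sⁱⁿ - (1 - r) y₁ (s₁ⁱⁿ - s̄₁) Y`. -/
def shatP {n : ℕ} [NeZero n] (y sIn : Fin n → ℝ) (sbar1 r : ℝ) : Fin n → ℝ :=
  fun i => sIn i - (1 - r) * (y 0 * (sIn 0 - sbar1)) * (1 / y i)

/-- `μ(r) = y₁ (s̄₁⁺ - s̄₁) ∫₀¹ (1 - D / F(φ_ν(ŝ⁺(r)))) dν`, where `s̄₁⁺ = r s₁ⁱⁿ + (1-r) s̄₁`. -/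
def muFun {n : ℕ} [NeZero n] (F : (Fin n → ℝ) → ℝ) (D : ℝ) (y sIn : Fin n → ℝ)
    (sbar1 r : ℝ) : ℝ :=
  y 0 * ((r * sIn 0 + (1 - r) * sbar1) - sbar1) *
    ∫ ν in (0:ℝ)..1, (1 - D / F (phiNu y sbar1 ν (shatP y sIn sbar1 r)))

/-- `Γ_ρ⁺ = {s ∈ ℝⁿ₊ : s₁ = s̄₁⁺, V_i(s) > -ρ for all i = 2,…,n}`. -/
def GammaRho {n : ℕ} [NeZero n] (y sIn : Fin n → ℝ) (sbar1 r ρ : ℝ) : Set (Fin n → ℝ) :=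
  {s | (∀ i, 0 < s i) ∧ s 0 = r * sIn 0 + (1 - r) * sbar1 ∧
    ∀ i, i ≠ 0 → -ρ < Vfun y sIn i s}

/-- `Ω^ρ = {s ∈ Ω₁ : V_i(s) > -ρ for all i = 2,…,n}`. -/
def OmegaRho {n : ℕ} [NeZero n] (y sIn : Fin n → ℝ) (sbar1 ρ : ℝ) : Set (Fin n → ℝ) :=
  {s | s ∈ Omega1 y sIn sbar1 ∧ ∀ i, i ≠ 0 → -ρ < Vfun y sIn i s}

/-- The cycle map `s ↦ g(φ₁(s)) = r sⁱⁿ + (1 - r) φ₁(s)`. -/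
def cycMap {n : ℕ} [NeZero n] (y sIn : Fin n → ℝ) (sbar1 r : ℝ)
    (s : Fin n → ℝ) : Fin n → ℝ :=
  fun i => r * sIn i + (1 - r) * phiNu y sbar1 1 s i

/-- A (right-continuous) solution of the impulsive self-cycling fermentation model
`eq:model`: between impulse times the ODEs hold, impulse times are exactly the times
where the left limit of `s₁` equals the threshold `s̄₁`, and at an impulse time the
state jumps according to the decanting/refilling map. -/
structure SCFSol (n : ℕ) [NeZero n] (F : (Fin n → ℝ) → ℝ) (D : ℝ) (y : Fin n → ℝ)
    (r : ℝ) (sIn : Fin n → ℝ) (sbar1 : ℝ) where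
  /-- nutrient concentrations -/
  s : ℝ → Fin n → ℝ
  /-- biomass concentration -/
  x : ℝ → ℝ
  /-- the set of impulse times -/
  T : Set ℝ
  /-- left limits of `s` (meaningful at impulse times) -/
  sLim : ℝ → Fin n → ℝ
  /-- left limit of `x` (meaningful at impulse times) -/
  xLim : ℝ → ℝ
  T_pos : ∀ t ∈ T, 0 < t
  init : sbar1 < s 0 0
  ode_s : ∀ t : ℝ, 0 ≤ t → t ∉ T → ∀ i,
    HasDerivAt (fun τ => s τ i) (-(1 / y i) * F (s t) * x t) t
  ode_x : ∀ t : ℝ, 0 ≤ t → t ∉ T →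
    HasDerivAt x ((-D + F (s t)) * x t) t
  left_s : ∀ t ∈ T, ∀ i,
    Filter.Tendsto (fun τ => s τ i) (nhdsWithin t (Set.Iio t)) (nhds (sLim t i))
  left_x : ∀ t ∈ T, Filter.Tendsto x (nhdsWithin t (Set.Iio t)) (nhds (xLim t))
  hit : ∀ t ∈ T, sLim t 0 = sbar1
  exact_hit : ∀ t : ℝ, 0 < t → t ∉ T → s t 0 ≠ sbar1
  jump_s : ∀ t ∈ T, ∀ i, s t i = r * sIn i + (1 - r) * sLim t i
  jump_x : ∀ t ∈ T, x t = (1 - r) * xLim t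

/-- Convergence of a solution to the unique periodic orbit: there are infinitely many
impulses and, along the (increasing) enumeration of the impulse times, the post-impulse
nutrient states converge to `ŝ⁺(r)`, the post-impulse biomass converges to
`((1-r)/r) μ(r)`, and the pre-impulse biomass converges to `(1/r) μ(r)`. -/
def ConvergesToPeriodic {n : ℕ} [NeZero n] {F : (Fin n → ℝ) → ℝ} {D : ℝ}
    {y : Fin n → ℝ} {r : ℝ} {sIn : Fin n → ℝ} {sbar1 : ℝ}
    (sol : SCFSol n F D y r sIn sbar1) : Prop :=
  sol.T.Infinite ∧
  ∀ tk : ℕ → ℝ, StrictMono tk → Set.range tk = sol.T →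
    (∀ i, Filter.Tendsto (fun k => sol.s (tk k) i) Filter.atTop
      (nhds (shatP y sIn sbar1 r i))) ∧
    Filter.Tendsto (fun k => sol.x (tk k)) Filter.atTop
      (nhds ((1 - r) / r * muFun F D y sIn sbar1 r)) ∧
    Filter.Tendsto (fun k => sol.xLim (tk k)) Filter.atTop
      (nhds (1 / r * muFun F D y sIn sbar1 r))


lemma F_mono_aux {n : ℕ} {F : (Fin n → ℝ) → ℝ} (hF : FHyp F)
    (a b : Fin n → ℝ) (ha : ∀ i, 0 < a i) (hab : ∀ i, a i ≤ b i) : F a ≤ F b := by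
  classical
  have key : ∀ t : Finset (Fin n), F a ≤ F (t.piecewise b a) := by
    intro t
    induction t using Finset.induction_on with
    | empty => simp
    | @insert j t hj ih =>
      rw [Finset.piecewise_insert]
      have hcpos : ∀ i, 0 < Finset.piecewise t b a i := by
        intro i
        by_cases h : i ∈ t
        · rw [Finset.piecewise_eq_of_mem _ _ _ h]; exact lt_of_lt_of_le (ha i) (hab i)
        · rw [Finset.piecewise_eq_of_notMem _ _ _ h]; exact ha i
      have hcj : Finset.piecewise t b a j = a j := Finset.piecewise_eq_of_notMem _ _ _ hj
      rcases eq_or_lt_of_le (hab j) with h | h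
      · rw [show b j = Finset.piecewise t b a j by rw [hcj, ← h], Function.update_eq_self]
        exact ih
      · have hstep := hF.2.2.2 _ hcpos j (b j - a j) (by linarith)
        rw [hcj, show a j + (b j - a j) = b j by ring] at hstep
        exact le_trans ih hstep.le
  have h := key Finset.univ
  rwa [Finset.piecewise_univ] at h

set_option maxHeartbeats 2000000 in
/-- Lemma 3.11: if `sⁱⁿ ∈ Ω₁`, `r ∈ (0,1)` and `μ(r) > 0`, then there
is `ρ > 0` such that every `s ∈ Γ⁺` with `V_i(s) > -ρ` for all `i = 2,…,n` lies in `Ω₁`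
and has strictly positive net biomass change `I(s)` over one cycle, i.e. `Γ_ρ⁺ ⊆ G⁺`. -/
theorem scf_GammaRho_subset_Gplus {n : ℕ} [NeZero n] (F : (Fin n → ℝ) → ℝ) (hF : FHyp F)
    (D : ℝ) (hD : 0 < D) (y : Fin n → ℝ) (hy : ∀ i, 0 < y i)
    (sIn : Fin n → ℝ) (hsIn : ∀ i, 0 < sIn i)
    (r : ℝ) (hr : r ∈ Set.Ioo (0:ℝ) 1)
    (sbar1 : ℝ) (hsbar1 : 0 < sbar1) (hsbar1' : sbar1 < sIn 0)
    (hOm : sIn ∈ Omega1 y sIn sbar1)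
    (hmu : 0 < muFun F D y sIn sbar1 r) :
    ∃ ρ : ℝ, 0 < ρ ∧ ∀ sv : Fin n → ℝ, sv ∈ GammaRho y sIn sbar1 r ρ →
      sv ∈ Omega1 y sIn sbar1 ∧ 0 < Ifun F D y sbar1 sv := by
  classical
  obtain ⟨hr0, hr1⟩ := hr
  obtain ⟨K, hK⟩ := hF.1
  have hy0 := hy 0
  have hy0' : y 0 ≠ 0 := ne_of_gt hy0
  set K' : ℝ := (K : ℝ) + 1 with hK'def
  have hK'pos : 0 < K' := by positivity
  have hK'ne : K' ≠ 0 := ne_of_gt hK'pos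
  have hKK' : LipschitzOnWith (K + 1) F {s : Fin n → ℝ | ∀ i, 0 ≤ s i} := by
    intro x hx z hz
    refine le_trans (hK hx hz) (mul_le_mul_left ?_ _)
    exact_mod_cast le_self_add
  have hΔ : 0 < sIn 0 - sbar1 := by linarith
  set sh := shatP y sIn sbar1 r with hshdef
  have hsh0 : sh 0 = r * sIn 0 + (1 - r) * sbar1 := by
    simp only [hshdef, shatP]
    field_simp
    ring
  have hsh0' : sh 0 - sbar1 = r * (sIn 0 - sbar1) := by rw [hsh0]; ring
  have hshmul : ∀ i, y i * sh i = y i * sIn i - (1 - r) * (y 0 * (sIn 0 - sbar1)) := by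
    intro i
    have hyi' : y i ≠ 0 := ne_of_gt (hy i)
    simp only [hshdef, shatP]
    field_simp
  -- the margins δ i > 0
  have hδ : ∀ i, 0 < y i * sIn i - y 0 * (sIn 0 - sbar1) := by
    intro i
    by_cases hi : i = 0
    · subst hi; nlinarith [hsIn 0]
    · have h := hOm.2.2 i hi
      simp only [Vfun, Vbar, sub_self, mul_zero, zero_sub] at h
      linarith
  -- lower bound for the reference path
  have hpath : ∀ nu ∈ Set.Icc (0:ℝ) 1, ∀ i,
      (y i * sIn i - y 0 * (sIn 0 - sbar1)) / y i ≤ phiNu y sbar1 nu sh i := by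
    intro nu hnu i
    have hyi := hy i
    have hyi' : y i ≠ 0 := ne_of_gt hyi
    rw [← mul_le_mul_iff_right₀ hyi]
    have h1 : y i * ((y i * sIn i - y 0 * (sIn 0 - sbar1)) / y i)
        = y i * sIn i - y 0 * (sIn 0 - sbar1) := by field_simp
    have h2 : y i * phiNu y sbar1 nu sh i
        = y i * sh i - nu * (y 0 * (r * (sIn 0 - sbar1))) := by
      simp only [phiNu, hsh0']
      field_simp
    rw [h1, h2, hshmul i]
    nlinarith [mul_pos hy0 hΔ, hnu.1, hnu.2,
      mul_nonneg (mul_nonneg hr0.le (sub_nonneg.2 hnu.2)) (mul_pos hy0 hΔ).le]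
  have hpathpos : ∀ nu ∈ Set.Icc (0:ℝ) 1, ∀ i, 0 < phiNu y sbar1 nu sh i := by
    intro nu hnu i
    exact lt_of_lt_of_le (div_pos (hδ i) (hy i)) (hpath nu hnu i)
  -- continuity facts
  have hφcont : ∀ s0 : Fin n → ℝ, Continuous fun nu : ℝ => phiNu y sbar1 nu s0 := by
    intro s0
    unfold phiNu
    exact continuous_pi fun i => by fun_prop
  have hFcomp : ∀ s0 : Fin n → ℝ, (∀ nu ∈ Set.Icc (0:ℝ) 1, ∀ i, 0 < phiNu y sbar1 nu s0 i) →
      ContinuousOn (fun nu => F (phiNu y sbar1 nu s0)) (Set.Icc (0:ℝ) 1) := by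
    intro s0 hpos
    have h := ContinuousOn.comp hK.continuousOn (hφcont s0).continuousOn
      (fun nu hnu => by exact fun i => (hpos nu hnu i).le)
    exact h
  have hcont_int : ∀ s0 : Fin n → ℝ, (∀ nu ∈ Set.Icc (0:ℝ) 1, ∀ i, 0 < phiNu y sbar1 nu s0 i) →
      ContinuousOn (fun nu => 1 - D / F (phiNu y sbar1 nu s0)) (Set.Icc (0:ℝ) 1) := by
    intro s0 hpos
    exact continuousOn_const.sub (continuousOn_const.div (hFcomp s0 hpos)
      (fun nu hnu => ne_of_gt (hF.2.2.1 _ (hpos nu hnu))))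
  -- minimum m of F along the reference path
  obtain ⟨nu0, hnu0, hminn⟩ := IsCompact.exists_isMinOn isCompact_Icc
    (Set.nonempty_Icc.2 zero_le_one) (hFcomp sh hpathpos)
  set m : ℝ := F (phiNu y sbar1 nu0 sh) with hmdef
  have hmin : ∀ nu ∈ Set.Icc (0:ℝ) 1, m ≤ F (phiNu y sbar1 nu sh) := fun nu hnu => hminn hnu
  have hm : 0 < m := hF.2.2.1 _ (fun i => hpathpos nu0 hnu0 i)
  -- positivity of the reference integral J
  set J : ℝ := ∫ nu in (0:ℝ)..1, (1 - D / F (phiNu y sbar1 nu sh)) with hJdef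
  have hr2 : 0 < r * (sIn 0 - sbar1) := mul_pos hr0 hΔ
  have hpre : 0 < y 0 * ((r * sIn 0 + (1 - r) * sbar1) - sbar1) := by
    nlinarith [mul_pos hy0 hr2]
  have hJ : 0 < J := by
    unfold muFun at hmu
    rw [← hshdef, ← hJdef] at hmu
    nlinarith
  clear_value sh m
  -- minimum of y
  obtain ⟨i₀, -, hymin⟩ := Finset.exists_min_image Finset.univ y ⟨0, Finset.mem_univ 0⟩
  have hymin' : ∀ i, y i₀ ≤ y i := fun i => hymin i (Finset.mem_univ i)
  have hymin0 : 0 < y i₀ := hy i₀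
  -- minimum of δ
  obtain ⟨i₁, -, hδmin⟩ := Finset.exists_min_image Finset.univ
    (fun i => y i * sIn i - y 0 * (sIn 0 - sbar1)) ⟨0, Finset.mem_univ 0⟩
  have hδmin' : ∀ i, y i₁ * sIn i₁ - y 0 * (sIn 0 - sbar1) ≤ y i * sIn i - y 0 * (sIn 0 - sbar1) :=
    fun i => hδmin i (Finset.mem_univ i)
  -- choice of ρ
  refine ⟨min ((y i₁ * sIn i₁ - y 0 * (sIn 0 - sbar1)) / 2)
    (min (m * y i₀ / (2 * K')) (J * m ^ 2 * y i₀ / (4 * D * K'))), ?_, ?_⟩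
  · have := hδ i₁
    positivity
  set ρ : ℝ := min ((y i₁ * sIn i₁ - y 0 * (sIn 0 - sbar1)) / 2)
    (min (m * y i₀ / (2 * K')) (J * m ^ 2 * y i₀ / (4 * D * K'))) with hρdef
  have hρ0 : 0 < ρ := by
    have := hδ i₁
    positivity
  have hρδ : ∀ i, ρ < y i * sIn i - y 0 * (sIn 0 - sbar1) := by
    intro i
    calc ρ ≤ (y i₁ * sIn i₁ - y 0 * (sIn 0 - sbar1)) / 2 := min_le_left _ _
      _ < y i₁ * sIn i₁ - y 0 * (sIn 0 - sbar1) := by linarith [hδ i₁]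
      _ ≤ _ := hδmin' i
  have hρm : ρ ≤ m * y i₀ / (2 * K') := le_trans (min_le_right _ _) (min_le_left _ _)
  have hρJ : ρ ≤ J * m ^ 2 * y i₀ / (4 * D * K') :=
    le_trans (min_le_right _ _) (min_le_right _ _)
  clear_value ρ
  clear hρdef
  set E : ℝ := K' * (ρ / y i₀) with hEdef
  have hE0 : 0 ≤ E := by positivity
  have hEm : E ≤ m / 2 := by
    have h1 := hρm
    calc E = K' * (ρ / y i₀) := rfl
      _ ≤ K' * ((m * y i₀ / (2 * K')) / y i₀) := by gcongr
      _ = m / 2 := by field_simp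
  have hEJ : E ≤ J * m ^ 2 / (4 * D) := by
    have h1 := hρJ
    calc E = K' * (ρ / y i₀) := rfl
      _ ≤ K' * ((J * m ^ 2 * y i₀ / (4 * D * K')) / y i₀) := by gcongr
      _ = J * m ^ 2 / (4 * D) := by field_simp
  intro sv hsv
  obtain ⟨hsvpos, hsv0, hsvV⟩ := hsv
  have hsv0' : sv 0 = sh 0 := by rw [hsv0, hsh0]
  -- the comparison point w
  set w : Fin n → ℝ := fun i => if i = 0 then sh 0 else sh i - ρ / y i with hwdef
  have hw0 : w 0 = sh 0 := if_pos rfl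
  have hwival : ∀ i, i ≠ 0 → w i = sh i - ρ / y i := fun i hi => if_neg hi
  clear_value w
  have hw_le_sv : ∀ i, w i ≤ sv i := by
    intro i
    by_cases hi : i = 0
    · subst hi; rw [hw0, hsv0']
    · have hVi := hsvV i hi
      simp only [Vfun] at hVi
      rw [hsv0] at hVi
      have hyi := hy i
      have hyi' : y i ≠ 0 := ne_of_gt hyi
      rw [hwival i hi, ← mul_le_mul_iff_right₀ hyi]
      have hρyi : y i * (ρ / y i) = ρ := by field_simp
      have h1 : y i * (sh i - ρ / y i)
          = y i * sIn i - (1 - r) * (y 0 * (sIn 0 - sbar1)) - ρ := by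
        rw [mul_sub, hshmul i, hρyi]
      rw [h1]
      nlinarith
  have hφw_ge : ∀ nu : ℝ, ∀ i, phiNu y sbar1 nu sh i - ρ / y i ≤ phiNu y sbar1 nu w i := by
    intro nu i
    simp only [phiNu, hw0]
    by_cases hi : i = 0
    · subst hi
      rw [hw0]
      have h0 : 0 ≤ ρ / y 0 := div_nonneg hρ0.le hy0.le
      linarith
    · rw [hwival i hi]
      exact le_of_eq (by ring)
  have hφwpos : ∀ nu ∈ Set.Icc (0:ℝ) 1, ∀ i, 0 < phiNu y sbar1 nu w i := by
    intro nu hnu i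
    have h1 := hpath nu hnu i
    have h2 := hφw_ge nu i
    have h3 := hρδ i
    have hyi := hy i
    have h4 : 0 < (y i * sIn i - y 0 * (sIn 0 - sbar1)) / y i - ρ / y i := by
      rw [div_sub_div_same]
      exact div_pos (by linarith) hyi
    linarith
  have hφsv_ge : ∀ nu : ℝ, ∀ i, phiNu y sbar1 nu w i ≤ phiNu y sbar1 nu sv i := by
    intro nu i
    simp only [phiNu]
    rw [hw0, hsv0']
    linarith [hw_le_sv i]
  have hφsvpos : ∀ nu ∈ Set.Icc (0:ℝ) 1, ∀ i, 0 < phiNu y sbar1 nu sv i := by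
    intro nu hnu i
    exact lt_of_lt_of_le (hφwpos nu hnu i) (hφsv_ge nu i)
  -- distance bound between the w-path and the reference path
  have hdist : ∀ nu : ℝ, dist (phiNu y sbar1 nu w) (phiNu y sbar1 nu sh) ≤ ρ / y i₀ := by
    intro nu
    rw [dist_pi_le_iff (div_nonneg hρ0.le hymin0.le)]
    intro i
    rw [Real.dist_eq]
    have heq : phiNu y sbar1 nu w i - phiNu y sbar1 nu sh i = w i - sh i := by
      simp only [phiNu, hw0]; ring
    rw [heq]
    by_cases hi : i = 0
    · subst hi
      rw [hw0, sub_self, abs_zero]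
      exact div_nonneg hρ0.le hymin0.le
    · rw [hwival i hi,
        show sh i - ρ / y i - sh i = -(ρ / y i) by ring, abs_neg,
        abs_of_nonneg (div_nonneg hρ0.le (hy i).le)]
      gcongr
      exact hymin' i
  -- pointwise integrand comparison
  have hFw_ge : ∀ nu ∈ Set.Icc (0:ℝ) 1,
      F (phiNu y sbar1 nu sh) - E ≤ F (phiNu y sbar1 nu w) := by
    intro nu hnu
    have hmem1 : phiNu y sbar1 nu w ∈ {s : Fin n → ℝ | ∀ i, 0 ≤ s i} :=
      fun i => (hφwpos nu hnu i).le
    have hmem2 : phiNu y sbar1 nu sh ∈ {s : Fin n → ℝ | ∀ i, 0 ≤ s i} :=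
      fun i => (hpathpos nu hnu i).le
    have h := hKK'.dist_le_mul _ hmem1 _ hmem2
    rw [Real.dist_eq] at h
    have h2 : |F (phiNu y sbar1 nu w) - F (phiNu y sbar1 nu sh)| ≤ E := by
      calc |F (phiNu y sbar1 nu w) - F (phiNu y sbar1 nu sh)|
          ≤ (K + 1 : NNReal) * dist (phiNu y sbar1 nu w) (phiNu y sbar1 nu sh) := h
        _ ≤ K' * (ρ / y i₀) := by
            push_cast
            rw [hK'def]
            gcongr
            exact hdist nu
        _ = E := rfl
    have := abs_le.1 h2
    linarith [this.1]
  have hptwise : ∀ nu ∈ Set.Icc (0:ℝ) 1,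
      (1 - D / F (phiNu y sbar1 nu sh)) - J / 2 ≤ 1 - D / F (phiNu y sbar1 nu sv) := by
    intro nu hnu
    set a : ℝ := F (phiNu y sbar1 nu sv) with hadef
    set b : ℝ := F (phiNu y sbar1 nu sh) with hbdef
    set c : ℝ := F (phiNu y sbar1 nu w) with hcdef
    have h_ca : c ≤ a := F_mono_aux hF _ _ (hφwpos nu hnu) (hφsv_ge nu)
    have h_bc : b - E ≤ c := hFw_ge nu hnu
    have hb_m : m ≤ b := hmin nu hnu
    have hbE : m / 2 ≤ b - E := by linarith
    have hbE0 : 0 < b - E := by linarith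
    have ha0 : 0 < a := by linarith
    have hb0 : 0 < b := by linarith
    have h1 : D / a ≤ D / (b - E) := by
      gcongr
      linarith
    have h2 : D / (b - E) - D / b = D * E / ((b - E) * b) := by
      field_simp
      ring
    have h4 : m / 2 * m ≤ (b - E) * b := by nlinarith
    have h3 : D * E / ((b - E) * b) ≤ J / 2 := by
      rw [div_le_iff₀ (by positivity)]
      have h5 : D * E ≤ D * (J * m ^ 2 / (4 * D)) :=
        mul_le_mul_of_nonneg_left hEJ hD.le
      have h6 : D * (J * m ^ 2 / (4 * D)) = J / 2 * (m / 2 * m) := by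
        field_simp
        ring
      have h7 : J / 2 * (m / 2 * m) ≤ J / 2 * ((b - E) * b) := by
        have : (0:ℝ) ≤ J / 2 := by positivity
        exact mul_le_mul_of_nonneg_left h4 this
      linarith
    linarith
  -- integrability
  have hint_sv : IntervalIntegrable (fun nu => 1 - D / F (phiNu y sbar1 nu sv))
      MeasureTheory.volume 0 1 := by
    apply ContinuousOn.intervalIntegrable
    rw [Set.uIcc_of_le zero_le_one]
    exact hcont_int sv hφsvpos
  have hint_sh : IntervalIntegrable (fun nu => 1 - D / F (phiNu y sbar1 nu sh))
      MeasureTheory.volume 0 1 := by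
    apply ContinuousOn.intervalIntegrable
    rw [Set.uIcc_of_le zero_le_one]
    exact hcont_int sh hpathpos
  have hint_g : IntervalIntegrable (fun nu => (1 - D / F (phiNu y sbar1 nu sh)) - J / 2)
      MeasureTheory.volume 0 1 := hint_sh.sub intervalIntegrable_const
  have hIcomp : J - J / 2 ≤ ∫ nu in (0:ℝ)..1, (1 - D / F (phiNu y sbar1 nu sv)) := by
    have hmono := intervalIntegral.integral_mono_on zero_le_one hint_g hint_sv hptwise
    have heq : (∫ nu in (0:ℝ)..1, ((1 - D / F (phiNu y sbar1 nu sh)) - J / 2)) = J - J / 2 := by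
      rw [intervalIntegral.integral_sub hint_sh intervalIntegrable_const,
        intervalIntegral.integral_const]
      simp [hJdef]
    linarith [hmono, heq.symm.le]
  constructor
  · -- membership in Omega1
    refine ⟨hsvpos, ?_, ?_⟩
    · rw [hsv0]; nlinarith
    · intro i hi
      have h1 := hsvV i hi
      have h2 := hρδ i
      simp only [Vbar]
      nlinarith
  · -- positivity of Ifun
    unfold Ifun
    rw [hsv0]
    have : 0 < ∫ nu in (0:ℝ)..1, (1 - D / F (phiNu y sbar1 nu sv)) := by linarith
    nlinarith


end
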